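/- Let g : ℝ → ℂ be an integrable function vanishing outside the interval [-1, 1], and suppose g is not almost everywhere zero. Then the set {r ∈ ℝ : ∫_ℝ exp(i r t) g(t) dt = 0} is countable. -/

import Mathlib

open MeasureTheory

lemma aux_mul_integrable {h : ℝ → ℂ} (hh : Integrable h volume)
    (hs : ∀ t : ℝ, t ∉ Set.Icc (-1 : ℝ) 1 → h t = 0)
    {f : ℝ → ℂ} (hf : Continuous f) :
    Integrable (fun t : ℝ => f t * h t) volume := by
  obtain ⟨C, hC⟩ := (isCompact_Icc (a := (-1 : ℝ)) (b := 1)).exists_bound_of_continuousOn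
    hf.continuousOn
  refine (hh.norm.const_mul C).mono' (hf.aestronglyMeasurable.mul hh.1)
    (Filter.Eventually.of_forall fun t => ?_)
  by_cases ht : t ∈ Set.Icc (-1 : ℝ) 1
  · rw [norm_mul]
    exact mul_le_mul_of_nonneg_right (hC t ht) (norm_nonneg _)
  · simp [hs t ht]

lemma aux_hasDerivAt {h : ℝ → ℂ} (hh : Integrable h volume)
    (hs : ∀ t : ℝ, t ∉ Set.Icc (-1 : ℝ) 1 → h t = 0) (z₀ : ℂ) :
    HasDerivAt (fun z : ℂ => ∫ t : ℝ, Complex.exp (Complex.I * z * t) * h t)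
      (∫ t : ℝ, Complex.exp (Complex.I * z₀ * t) * (Complex.I * t) * h t) z₀ := by
  have key := hasDerivAt_integral_of_dominated_loc_of_deriv_le (μ := volume) (x₀ := z₀)
    (F := fun (z : ℂ) (t : ℝ) => Complex.exp (Complex.I * z * t) * h t)
    (F' := fun (z : ℂ) (t : ℝ) => Complex.exp (Complex.I * z * t) * (Complex.I * t) * h t)
    (bound := fun t => Real.exp (‖z₀‖ + 1) * ‖h t‖) (s := Metric.ball z₀ 1) (Metric.ball_mem_nhds z₀ one_pos)
    ?_ ?_ ?_ ?_ ?_ ?_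
  · exact key.2
  · exact Filter.Eventually.of_forall fun z =>
      ((Complex.continuous_exp.comp
        ((continuous_const.mul Complex.continuous_ofReal))).aestronglyMeasurable).mul hh.1
  · exact aux_mul_integrable hh hs (Complex.continuous_exp.comp
      (continuous_const.mul Complex.continuous_ofReal))
  · exact (((Complex.continuous_exp.comp
      (continuous_const.mul Complex.continuous_ofReal)).mul
      (continuous_const.mul Complex.continuous_ofReal)).aestronglyMeasurable).mul hh.1
  · refine Filter.Eventually.of_forall fun t => fun z hz => ?_
    by_cases ht : t ∈ Set.Icc (-1 : ℝ) 1
    · have ht1 : |t| ≤ 1 := abs_le.2 ⟨ht.1, ht.2⟩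
      have hz1 : ‖z‖ ≤ ‖z₀‖ + 1 := by
        have := mem_ball_iff_norm.1 hz
        calc ‖z‖ = ‖z₀ + (z - z₀)‖ := by ring_nf
          _ ≤ ‖z₀‖ + ‖z - z₀‖ := norm_add_le _ _
          _ ≤ ‖z₀‖ + 1 := by linarith
      have hre : (Complex.I * z * t).re = -(z.im * t) := by
        simp [Complex.mul_re, Complex.mul_im]
      have hexp : ‖Complex.exp (Complex.I * z * t)‖ ≤ Real.exp (‖z₀‖ + 1) := by
        rw [Complex.norm_exp, hre]
        apply Real.exp_le_exp.2
        calc -(z.im * t) ≤ |(-(z.im * t))| := le_abs_self _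
          _ = |z.im| * |t| := by rw [abs_neg, abs_mul]
          _ ≤ ‖z‖ * 1 := by
              apply mul_le_mul _ ht1 (abs_nonneg _) (norm_nonneg _)
              exact Complex.abs_im_le_norm z
          _ ≤ ‖z₀‖ + 1 := by linarith
      have hIt : ‖Complex.I * (t : ℂ)‖ ≤ 1 := by
        rw [norm_mul, Complex.norm_I, one_mul, Complex.norm_real, Real.norm_eq_abs]
        exact ht1
      calc ‖Complex.exp (Complex.I * z * t) * (Complex.I * t) * h t‖
          = ‖Complex.exp (Complex.I * z * t)‖ * ‖Complex.I * (t : ℂ)‖ * ‖h t‖ := by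
            rw [norm_mul, norm_mul]
        _ ≤ Real.exp (‖z₀‖ + 1) * 1 * ‖h t‖ := by
            apply mul_le_mul_of_nonneg_right _ (norm_nonneg _)
            exact mul_le_mul hexp hIt (norm_nonneg _) (Real.exp_nonneg _)
        _ = Real.exp (‖z₀‖ + 1) * ‖h t‖ := by ring
    · simp [hs t ht, Real.exp_nonneg, mul_nonneg, norm_nonneg]
  · exact hh.norm.const_mul _
  · refine Filter.Eventually.of_forall fun t => fun z _ => ?_
    have h1 : HasDerivAt (fun z : ℂ => Complex.I * z * (t : ℂ)) (Complex.I * t) z := by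
      simpa using ((hasDerivAt_id z).const_mul Complex.I).mul_const (t : ℂ)
    exact (h1.cexp).mul_const (h t)

lemma aux_ae_zero {g : ℝ → ℂ} (hg : Integrable g volume)
    (hsupp : ∀ t : ℝ, t ∉ Set.Icc (-1 : ℝ) 1 → g t = 0)
    (hzero : ∀ z : ℂ, ∫ t : ℝ, Complex.exp (Complex.I * z * t) * g t = 0) :
    g =ᵐ[volume] 0 := by
  -- integrability of any continuous multiple of g
  have hint : ∀ f : ℝ → ℂ, Continuous f → Integrable (fun t : ℝ => f t * g t) volume :=
    fun f hf => aux_mul_integrable hg hsupp hf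
  -- all "twisted moments" vanish
  have hmom : ∀ n : ℕ, ∀ z : ℂ,
      ∫ t : ℝ, Complex.exp (Complex.I * z * t) * ((Complex.I * t) ^ n * g t) = 0 := by
    intro n
    induction n with
    | zero => intro z; simpa using hzero z
    | succ n ih =>
      intro z
      have hcont : Continuous (fun t : ℝ => (Complex.I * (t : ℂ)) ^ n) :=
        (continuous_const.mul Complex.continuous_ofReal).pow n
      have hh : Integrable (fun t : ℝ => (Complex.I * (t : ℂ)) ^ n * g t) volume :=
        hint _ hcont
      have hhs : ∀ t : ℝ, t ∉ Set.Icc (-1 : ℝ) 1 →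
          (Complex.I * (t : ℂ)) ^ n * g t = 0 := fun t ht => by simp [hsupp t ht]
      have hd := aux_hasDerivAt hh hhs z
      have hzero' : (fun z : ℂ => ∫ t : ℝ,
          Complex.exp (Complex.I * z * t) * ((Complex.I * t) ^ n * g t)) = fun _ => (0 : ℂ) :=
        funext ih
      rw [hzero'] at hd
      have hD := hd.unique (hasDerivAt_const z 0)
      calc ∫ t : ℝ, Complex.exp (Complex.I * z * t) * ((Complex.I * t) ^ (n + 1) * g t)
          = ∫ t : ℝ, Complex.exp (Complex.I * z * t) * (Complex.I * t) *
              ((Complex.I * t) ^ n * g t) := by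
            congr 1; funext t; ring
        _ = 0 := hD
  -- moments vanish
  have hmon : ∀ n : ℕ, ∫ t : ℝ, (t : ℂ) ^ n * g t = 0 := by
    intro n
    have h0 := hmom n 0
    simp only [mul_zero, zero_mul, Complex.exp_zero, one_mul] at h0
    have : ∫ t : ℝ, (Complex.I * (t : ℂ)) ^ n * g t
        = Complex.I ^ n * ∫ t : ℝ, (t : ℂ) ^ n * g t := by
      rw [← integral_const_mul]
      congr 1; funext t; rw [mul_pow]; ring
    rw [this] at h0
    exact (mul_eq_zero.1 h0).resolve_left (pow_ne_zero n Complex.I_ne_zero)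
  -- polynomial moments vanish
  have hpoly : ∀ p : Polynomial ℝ, ∫ t : ℝ, ((p.eval t : ℝ) : ℂ) * g t = 0 := by
    intro p
    have heval : ∀ t : ℝ, ((p.eval t : ℝ) : ℂ)
        = ∑ i ∈ Finset.range (p.natDegree + 1), ((p.coeff i : ℝ) : ℂ) * (t : ℂ) ^ i := by
      intro t
      rw [Polynomial.eval_eq_sum_range]
      push_cast
      rfl
    calc ∫ t : ℝ, ((p.eval t : ℝ) : ℂ) * g t
        = ∫ t : ℝ, ∑ i ∈ Finset.range (p.natDegree + 1),
            ((p.coeff i : ℝ) : ℂ) * (t : ℂ) ^ i * g t := by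
          congr 1; funext t; rw [heval t, Finset.sum_mul]
      _ = ∑ i ∈ Finset.range (p.natDegree + 1),
            ∫ t : ℝ, ((p.coeff i : ℝ) : ℂ) * (t : ℂ) ^ i * g t := by
          apply integral_finset_sum
          intro i _
          exact hint _ ((continuous_const.mul (Complex.continuous_ofReal.pow i)))
      _ = 0 := by
          apply Finset.sum_eq_zero
          intro i _
          have : (fun t : ℝ => ((p.coeff i : ℝ) : ℂ) * (t : ℂ) ^ i * g t)
              = fun t : ℝ => ((p.coeff i : ℝ) : ℂ) * ((t : ℂ) ^ i * g t) := by
            funext t; ring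
          rw [this, integral_const_mul, hmon i, mul_zero]
  -- conclude by testing against smooth compactly supported functions
  apply ae_eq_zero_of_integral_contDiff_smul_eq_zero hg.locallyIntegrable
  intro φ hφ _
  simp_rw [Complex.real_smul]
  set C := ∫ t : ℝ, ‖g t‖ with hC
  have hC0 : 0 ≤ C := integral_nonneg fun t => norm_nonneg _
  have hkey : ∀ ε : ℝ, 0 < ε → ‖∫ t : ℝ, ((φ t : ℝ) : ℂ) * g t‖ ≤ ε * C := by
    intro ε hε
    obtain ⟨p, hp⟩ := exists_polynomial_near_of_continuousOn (-1) 1 φ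
      hφ.continuous.continuousOn ε hε
    have hint1 : Integrable (fun t : ℝ => (((φ t : ℝ) : ℂ) - ((p.eval t : ℝ) : ℂ)) * g t)
        volume := hint _ ((Complex.continuous_ofReal.comp hφ.continuous).sub
          (Complex.continuous_ofReal.comp (Polynomial.continuous p)))
    have hint2 : Integrable (fun t : ℝ => ((p.eval t : ℝ) : ℂ) * g t) volume :=
      hint _ (Complex.continuous_ofReal.comp (Polynomial.continuous p))
    have hsplit : ∫ t : ℝ, ((φ t : ℝ) : ℂ) * g t
        = ∫ t : ℝ, (((φ t : ℝ) : ℂ) - ((p.eval t : ℝ) : ℂ)) * g t := by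
      have : (fun t : ℝ => ((φ t : ℝ) : ℂ) * g t)
          = fun t : ℝ => (((φ t : ℝ) : ℂ) - ((p.eval t : ℝ) : ℂ)) * g t
              + ((p.eval t : ℝ) : ℂ) * g t := by
        funext t; ring
      rw [this, integral_add hint1 hint2, hpoly p, add_zero]
    rw [hsplit]
    calc ‖∫ t : ℝ, (((φ t : ℝ) : ℂ) - ((p.eval t : ℝ) : ℂ)) * g t‖
        ≤ ∫ t : ℝ, ‖(((φ t : ℝ) : ℂ) - ((p.eval t : ℝ) : ℂ)) * g t‖ :=
          norm_integral_le_integral_norm _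
      _ ≤ ∫ t : ℝ, ε * ‖g t‖ := by
          apply integral_mono_of_nonneg
            (Filter.Eventually.of_forall fun t => norm_nonneg _)
            (hg.norm.const_mul ε)
          refine Filter.Eventually.of_forall fun t => ?_
          by_cases ht : t ∈ Set.Icc (-1 : ℝ) 1
          · simp only [norm_mul]
            apply mul_le_mul_of_nonneg_right _ (norm_nonneg _)
            have : ((φ t : ℝ) : ℂ) - ((p.eval t : ℝ) : ℂ) = ((φ t - p.eval t : ℝ) : ℂ) := by
              push_cast; ring
            rw [this, Complex.norm_real, Real.norm_eq_abs, abs_sub_comm]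
            exact le_of_lt (hp t ht)
          · simp [hsupp t ht, mul_nonneg, le_of_lt hε, norm_nonneg]
      _ = ε * C := by rw [integral_const_mul]
  have : ‖∫ t : ℝ, ((φ t : ℝ) : ℂ) * g t‖ ≤ 0 := by
    apply le_of_forall_pos_le_add
    intro ε hε
    have hε' : 0 < ε / (C + 1) := div_pos hε (by linarith)
    calc ‖∫ t : ℝ, ((φ t : ℝ) : ℂ) * g t‖ ≤ ε / (C + 1) * C := hkey _ hε'
      _ ≤ ε := by
          rw [div_mul_eq_mul_div, div_le_iff₀ (by linarith)]
          nlinarith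
      _ = 0 + ε := (zero_add ε).symm
  have h0 : ∫ t : ℝ, ((φ t : ℝ) : ℂ) * g t = 0 := norm_le_zero_iff.1 this
  exact h0

/-- If an integrable function `g` supported in `[-1,1]` is not a.e. zero, then its
Fourier transform vanishes on at most a countable set. -/
theorem countable_zero_set_of_fourier (g : ℝ → ℂ)
    (hg : Integrable g volume)
    (hsupp : ∀ t : ℝ, t ∉ Set.Icc (-1 : ℝ) 1 → g t = 0)
    (hne : ¬ g =ᵐ[volume] 0) :
    {r : ℝ | ∫ t : ℝ, Complex.exp (Complex.I * r * t) * g t = 0}.Countable := by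
  set F : ℂ → ℂ := fun z => ∫ t : ℝ, Complex.exp (Complex.I * z * t) * g t with hFdef
  have hdiff : Differentiable ℂ F := fun z => (aux_hasDerivAt hg hsupp z).differentiableAt
  have hanalytic : AnalyticOnNhd ℂ F Set.univ :=
    hdiff.differentiableOn.analyticOnNhd isOpen_univ
  set Z : Set ℝ := {r : ℝ | F (r : ℂ) = 0} with hZdef
  have main : ∀ n : ℕ, (Z ∩ Set.Icc (-(n : ℝ)) n).Finite := by
    intro n
    by_contra hfin
    have hinf : (Z ∩ Set.Icc (-(n : ℝ)) n).Infinite := hfin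
    obtain ⟨x, _, hacc⟩ := hinf.exists_accPt_of_subset_isCompact isCompact_Icc
      Set.inter_subset_right
    rw [accPt_iff_frequently] at hacc
    have hfreq : ∃ᶠ y in nhdsWithin x {x}ᶜ, F ((y : ℝ) : ℂ) = 0 := by
      rw [frequently_nhdsWithin_iff]
      exact hacc.mono fun y hy => ⟨hy.2.1, by simpa using hy.1⟩
    have htend : Filter.Tendsto (fun y : ℝ => (y : ℂ)) (nhdsWithin x {x}ᶜ)
        (nhdsWithin (x : ℂ) {(x : ℂ)}ᶜ) := by
      apply ContinuousWithinAt.tendsto_nhdsWithin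
        Complex.continuous_ofReal.continuousWithinAt
      intro y hy
      simp only [Set.mem_compl_iff, Set.mem_singleton_iff] at hy ⊢
      exact fun h => hy (by exact_mod_cast h)
    have hfreqC : ∃ᶠ z in nhdsWithin (x : ℂ) {(x : ℂ)}ᶜ, F z = 0 := htend.frequently hfreq
    have hzero : ∀ z : ℂ, F z = 0 := fun z =>
      hanalytic.eqOn_zero_of_preconnected_of_frequently_eq_zero isPreconnected_univ
        (Set.mem_univ (x : ℂ)) hfreqC (Set.mem_univ z)
    exact hne (aux_ae_zero hg hsupp hzero)
  have hsub : Z ⊆ ⋃ n : ℕ, (Z ∩ Set.Icc (-(n : ℝ)) n) := by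
    intro r hr
    refine Set.mem_iUnion.2 ⟨⌈|r|⌉₊, hr, ?_⟩
    have : |r| ≤ (⌈|r|⌉₊ : ℝ) := Nat.le_ceil _
    have h1 := abs_le.1 (le_of_lt (lt_of_le_of_lt this (lt_add_one _)))
    constructor
    · linarith [(abs_le.1 this).1]
    · exact (abs_le.1 this).2
  exact Set.Countable.mono hsub (Set.countable_iUnion fun n => (main n).countable)
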